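/- Let H be a 2-connected graph. Then c'(H) = c(H), where c(H) is the supremum of e(G)/v(G) and c'(H) is the supremum of e(G)/(v(G)-1), both taken over graphs G (with v(G) ≥ 2 in the latter case) not containing H as a minor. -/

import Mathlib

/-- `H` is a minor of `G`: there are nonempty, pairwise-disjoint, connected branch sets
in `G`, one for each vertex of `H`, with an edge of `G` between the branch sets of any
pair of vertices adjacent in `H`. -/
def SimpleGraph.HasMinor {β α : Type*} (G : SimpleGraph β) (H : SimpleGraph α) : Prop :=
  ∃ f : α → Set β,
    (∀ a, (f a).Nonempty) ∧
    (∀ a, (G.induce (f a)).Connected) ∧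
    (Pairwise fun a b => Disjoint (f a) (f b)) ∧
    ∀ a b, H.Adj a b → ∃ u ∈ f a, ∃ v ∈ f b, G.Adj u v

/-- The extremal function `c(H)`: the supremum of `e(G)/v(G)` over all non-null
finite graphs `G` not containing `H` as a minor. -/
noncomputable def cFun {α : Type*} (H : SimpleGraph α) : ℝ :=
  sSup {x | ∃ (n : ℕ) (G : SimpleGraph (Fin n)), 0 < n ∧ ¬ G.HasMinor H ∧
    x = (Nat.card G.edgeSet : ℝ) / (n : ℝ)}

/-- The vertex cover number `τ(H)`: the least size of a set of vertices meeting
every edge of `H`. -/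
noncomputable def coverNumber {α : Type*} (H : SimpleGraph α) : ℕ :=
  sInf {k | ∃ X : Set α, Nat.card X = k ∧ ∀ ⦃u v⦄, H.Adj u v → u ∈ X ∨ v ∈ X}

/-- `c'(H)`: the supremum of `e(G)/(v(G)-1)` over graphs `G` with at least two
vertices not containing `H` as a minor. -/
noncomputable def cPrime {α : Type*} (H : SimpleGraph α) : ℝ :=
  sSup {x | ∃ (n : ℕ) (G : SimpleGraph (Fin n)), 2 ≤ n ∧ ¬ G.HasMinor H ∧
    x = (Nat.card G.edgeSet : ℝ) / ((n : ℝ) - 1)}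

/-- `H` is 2-connected: it has at least 3 vertices and deleting any single vertex
leaves it connected. -/
def TwoConnected {α : Type*} [Fintype α] (H : SimpleGraph α) : Prop :=
  3 ≤ Fintype.card α ∧ ∀ v : α, (H.induce {u | u ≠ v}).Connected

open SimpleGraph

section Helpers
variable {V W α : Type*} {G : SimpleGraph V} {G' : SimpleGraph W} {H : SimpleGraph α}

/-- Pushing a connected induced set through an adjacency-preserving map keeps it connected. -/
lemma connected_induce_image (φ : V → W) {s : Set V}
    (hadj : ∀ u ∈ s, ∀ v ∈ s, G.Adj u v → G'.Adj (φ u) (φ v))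
    (h : (G.induce s).Connected) : (G'.induce (φ '' s)).Connected := by
  refine h.map (f := ⟨fun x => ⟨φ x.1, x.1, x.2, rfl⟩, ?_⟩) ?_
  · intro u v h'
    exact hadj u.1 u.2 v.1 v.2 h'
  rintro ⟨w, x, hx, rfl⟩
  exact ⟨⟨x, hx⟩, rfl⟩

/-- `HasMinor` transfers along a graph isomorphism. -/
lemma SimpleGraph.HasMinor.of_iso (φ : G ≃g G') (h : G.HasMinor H) : G'.HasMinor H := by
  obtain ⟨f, hne, hconn, hdisj, hadj⟩ := h
  refine ⟨fun a => φ '' f a, fun a => (hne a).image _, fun a => ?_, ?_, ?_⟩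
  · exact connected_induce_image φ (fun u _ v _ h => φ.map_adj_iff.2 h) (hconn a)
  · exact fun a b hab => Set.disjoint_image_of_injective φ.injective (hdisj hab)
  · intro a b hab
    obtain ⟨u, hu, v, hv, huv⟩ := hadj a b hab
    exact ⟨φ u, ⟨u, hu, rfl⟩, φ v, ⟨v, hv, rfl⟩, φ.map_adj_iff.2 huv⟩

/-- If `H` has at least `card > n` vertices then no graph on `Fin n` has `H` as minor. -/
lemma not_hasMinor_of_card_lt [Fintype α] {n : ℕ} (G : SimpleGraph (Fin n))
    (h : n < Fintype.card α) : ¬ G.HasMinor H := by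
  rintro ⟨f, hne, -, hdisj, -⟩
  have : Function.Injective (fun a => (hne a).choose) := by
    intro a b hab
    by_contra hne'
    have h1 := (hne a).choose_spec
    have h2 := (hne b).choose_spec
    simp only at hab
    rw [hab] at h1
    exact Set.disjoint_left.1 (hdisj hne') h1 h2
  have := Fintype.card_le_of_injective _ this
  simp only [Fintype.card_fin] at this
  omega

end Helpers

section Glue
variable {V : Type*}

/-- Projection from the glued vertex type back to `V`. -/
def gproj {k : ℕ} (v0 : V) (x : Option (Fin k × {u : V // u ≠ v0})) : V :=
  x.elim v0 fun p => p.2.1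

/-- Copy index of a glued vertex. -/
def gidx {k : ℕ} {v0 : V} (x : Option (Fin k × {u : V // u ≠ v0})) : Option (Fin k) :=
  x.map Prod.fst

/-- `k` copies of `G` glued at the vertex `v0`. -/
def Glue (G : SimpleGraph V) (v0 : V) (k : ℕ) :
    SimpleGraph (Option (Fin k × {u : V // u ≠ v0})) where
  Adj x y := G.Adj (gproj v0 x) (gproj v0 y) ∧ ∀ i ∈ gidx x, ∀ j ∈ gidx y, i = j
  symm := ⟨fun x y h => ⟨h.1.symm, fun i hi j hj => (h.2 j hj i hi).symm⟩⟩
  loopless := ⟨fun x h => G.irrefl h.1⟩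

variable {G : SimpleGraph V} {v0 : V} {k : ℕ}

lemma glue_adj {x y : Option (Fin k × {u : V // u ≠ v0})} :
    (Glue G v0 k).Adj x y ↔
      G.Adj (gproj v0 x) (gproj v0 y) ∧ ∀ i ∈ gidx x, ∀ j ∈ gidx y, i = j :=
  Iff.rfl

lemma glue_adj_proj {x y} (h : (Glue G v0 k).Adj x y) :
    G.Adj (gproj v0 x) (gproj v0 y) := (glue_adj.1 h).1

open scoped Classical in
/-- Lift a vertex of `V` into copy `i`. -/
noncomputable def glift {k : ℕ} {v0 : V} (i : Fin k) (u : V) :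
    Option (Fin k × {u : V // u ≠ v0}) :=
  if h : u = v0 then none else some (i, ⟨u, h⟩)

@[simp] lemma gproj_glift (i : Fin k) (u : V) : gproj v0 (glift (v0 := v0) i u) = u := by
  unfold glift gproj; split <;> simp_all

lemma glift_injective (i : Fin k) : Function.Injective (glift (v0 := v0) i) := by
  intro u w h
  have := congrArg (gproj v0) h
  simpa using this

lemma gidx_glift (i : Fin k) (u : V) :
    ∀ j ∈ gidx (glift (v0 := v0) i u), j = i := by
  unfold glift gidx; split <;> simp_all

lemma glue_adj_glift {i : Fin k} {u w : V} :
    (Glue G v0 k).Adj (glift i u) (glift i w) ↔ G.Adj u w := by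
  rw [glue_adj]
  constructor
  · intro h; simpa using h.1
  · intro h
    refine ⟨by simpa using h, fun a ha b hb => ?_⟩
    rw [gidx_glift i u a ha, gidx_glift i w b hb]

/-- `x` lies in copy `i` (or is the glue vertex). -/
def InCopy {k : ℕ} {v0 : V} (i : Fin k) (x : Option (Fin k × {u : V // u ≠ v0})) : Prop :=
  glift (v0 := v0) i (gproj v0 x) = x

@[simp] lemma inCopy_none (i : Fin k) : InCopy (v0 := v0) i none := by
  simp [InCopy, gproj, glift]

lemma inCopy_of_gidx {i : Fin k} {x : Option (Fin k × {u : V // u ≠ v0})}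
    (h : gidx x = some i) : InCopy i x := by
  match x with
  | none => simp [gidx] at h
  | some (j, u) =>
    simp only [gidx, Option.map_some, Option.some.injEq] at h
    cases h
    simp [InCopy, gproj, glift, u.2]

lemma gidx_of_inCopy {i : Fin k} {x : Option (Fin k × {u : V // u ≠ v0})}
    (h : InCopy i x) (hx : x ≠ none) : gidx x = some i := by
  match x with
  | none => exact absurd rfl hx
  | some (j, u) =>
    unfold InCopy glift at h
    split at h
    · exact absurd h (by simp)
    · simp only [Option.some.injEq, Prod.mk.injEq] at h
      simp [gidx, h.1]

lemma inCopy_unique {i j : Fin k} {x : Option (Fin k × {u : V // u ≠ v0})}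
    (hi : InCopy i x) (hj : InCopy j x) (hx : x ≠ none) : i = j := by
  have h1 := gidx_of_inCopy hi hx
  have h2 := gidx_of_inCopy hj hx
  rw [h1, Option.some.injEq] at h2
  exact h2

lemma inCopy_of_adj {i : Fin k} {x y : Option (Fin k × {u : V // u ≠ v0})}
    (h : (Glue G v0 k).Adj x y) (hy : InCopy i y) (hyn : y ≠ none) : InCopy i x := by
  match x with
  | none => simp
  | some (j, u) =>
    have : j = i := (glue_adj.1 h).2 j rfl i (by rw [gidx_of_inCopy hy hyn]; rfl)
    exact inCopy_of_gidx (by simp [gidx, this])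

lemma proj_injOn {i : Fin k} {x y : Option (Fin k × {u : V // u ≠ v0})}
    (hx : InCopy i x) (hy : InCopy i y) (h : gproj v0 x = gproj v0 y) : x = y := by
  rw [← hx, ← hy, h]

end Glue

section Core
variable {V : Type*} {G : SimpleGraph V} {v0 : V} {k : ℕ}

lemma reachable_const {β γ : Type*} {K : SimpleGraph β} (r : β → γ)
    (h : ∀ a b, K.Adj a b → r a = r b) {a b : β} (hr : K.Reachable a b) : r a = r b := by
  obtain ⟨p⟩ := hr
  induction p with
  | nil => rfl
  | cons h' q ih => exact (h _ _ h').trans ih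

lemma exists_some_gidx {x : Option (Fin k × {u : V // u ≠ v0})} (hx : x ≠ none) :
    ∃ i, gidx x = some i := by
  match x with
  | none => exact absurd rfl hx
  | some (j, u) => exact ⟨j, rfl⟩

/-- A connected set avoiding the glue vertex lies in a single copy. -/
lemma exists_inCopy_of_connected {S : Set (Option (Fin k × {u : V // u ≠ v0}))}
    (hc : ((Glue G v0 k).induce S).Connected) (hn : none ∉ S) :
    ∃ i, ∀ x ∈ S, InCopy i x := by
  obtain ⟨x0⟩ := hc.nonempty
  have hx0n : x0.1 ≠ none := fun h => hn (h ▸ x0.2)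
  obtain ⟨i0, hi0⟩ := exists_some_gidx hx0n
  refine ⟨i0, fun x hx => ?_⟩
  have hxn : x ≠ none := fun h => hn (h ▸ hx)
  obtain ⟨j, hj⟩ := exists_some_gidx hxn
  have hadj : ∀ a b : ↥S, ((Glue G v0 k).induce S).Adj a b → gidx a.1 = gidx b.1 := by
    intro a b hab
    have han : a.1 ≠ none := fun h => hn (h ▸ a.2)
    have hbn : b.1 ≠ none := fun h => hn (h ▸ b.2)
    obtain ⟨ia, hia⟩ := exists_some_gidx han
    obtain ⟨ib, hib⟩ := exists_some_gidx hbn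
    have : ia = ib := (glue_adj.1 hab).2 ia hia ib hib
    rw [hia, hib, this]
  have := reachable_const (fun a : ↥S => gidx a.1) hadj
    (hc.preconnected ⟨x, hx⟩ x0)
  simp only [hj, hi0, Option.some.injEq] at this
  exact inCopy_of_gidx (this ▸ hj)

/-- Trimming a connected set containing the glue vertex to one copy keeps it connected. -/
lemma trim_connected {T : Set (Option (Fin k × {u : V // u ≠ v0}))}
    (hc : ((Glue G v0 k).induce T).Connected) (hT : none ∈ T) (i : Fin k) :
    ((Glue G v0 k).induce {x | x ∈ T ∧ InCopy i x}).Connected := by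
  set T' : Set (Option (Fin k × {u : V // u ≠ v0})) := {x | x ∈ T ∧ InCopy i x} with hT'
  have hnone' : none ∈ T' := ⟨hT, inCopy_none i⟩
  have key : ∀ (x y : ↥T) (p : ((Glue G v0 k).induce T).Walk x y) (hy : y.1 = none)
      (hx : x.1 ∈ T'), ((Glue G v0 k).induce T').Reachable ⟨x.1, hx⟩ ⟨none, hnone'⟩ := by
    intro x y p
    induction p with
    | @nil xx =>
      intro hy hx
      have : (⟨xx.1, hx⟩ : ↥T') = ⟨none, hnone'⟩ := Subtype.ext hy
      rw [this]
    | @cons xx zz yy h' q ih =>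
      intro hy hx
      by_cases hxn : xx.1 = none
      · have : (⟨xx.1, hx⟩ : ↥T') = ⟨none, hnone'⟩ := Subtype.ext hxn
        rw [this]
      · by_cases hzn : zz.1 = none
        · have hadj : ((Glue G v0 k).induce T').Adj ⟨xx.1, hx⟩ ⟨none, hnone'⟩ := by
            show (Glue G v0 k).Adj xx.1 none
            rw [← hzn]; exact h'
          exact hadj.reachable
        · have hz' : zz.1 ∈ T' := ⟨zz.2, inCopy_of_adj ((Glue G v0 k).adj_symm h') hx.2 hxn⟩
          have hadj : ((Glue G v0 k).induce T').Adj ⟨xx.1, hx⟩ ⟨zz.1, hz'⟩ := h'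
          exact hadj.reachable.trans (ih hy hz')
  rw [connected_iff]
  refine ⟨fun x y => ?_, ⟨⟨none, hnone'⟩⟩⟩
  obtain ⟨px⟩ := hc.preconnected ⟨x.1, x.2.1⟩ ⟨none, hT⟩
  obtain ⟨py⟩ := hc.preconnected ⟨y.1, y.2.1⟩ ⟨none, hT⟩
  exact (key _ _ px rfl x.2).trans (key _ _ py rfl y.2).symm

/-- Pull back a minor living in one copy (plus glue vertex) to `G`. -/
lemma hasMinor_of_glue_inCopy {α : Type*} {H : SimpleGraph α}
    {f : α → Set (Option (Fin k × {u : V // u ≠ v0}))} (i : Fin k)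
    (hne : ∀ a, (f a).Nonempty) (hconn : ∀ a, ((Glue G v0 k).induce (f a)).Connected)
    (hdisj : Pairwise fun a b => Disjoint (f a) (f b))
    (hadjf : ∀ a b, H.Adj a b → ∃ u ∈ f a, ∃ v ∈ f b, (Glue G v0 k).Adj u v)
    (hcopy : ∀ a, ∀ x ∈ f a, InCopy i x) : G.HasMinor H := by
  refine ⟨fun a => gproj v0 '' f a, fun a => (hne a).image _, fun a => ?_, ?_, ?_⟩
  · exact connected_induce_image (gproj v0) (fun u _ v _ h => glue_adj_proj h) (hconn a)
  · intro a b hab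
    rw [Set.disjoint_left]
    rintro u ⟨x, hx, rfl⟩ ⟨y, hy, hxy⟩
    have : x = y := proj_injOn (hcopy a x hx) (hcopy b y hy) hxy.symm
    exact Set.disjoint_left.1 (hdisj hab) hx (this ▸ hy)
  · intro a b hab
    obtain ⟨x, hx, y, hy, hxy⟩ := hadjf a b hab
    exact ⟨gproj v0 x, ⟨x, hx, rfl⟩, gproj v0 y, ⟨y, hy, rfl⟩, glue_adj_proj hxy⟩

end Core

section Main
variable {V : Type*} {G : SimpleGraph V} {v0 : V} {k : ℕ}
variable {α : Type*} [Fintype α] {H : SimpleGraph α}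

lemma TwoConnected.to_connected (hH : TwoConnected H) : H.Connected := by
  have h3 := hH.1
  have hne : Nonempty α := Fintype.card_pos_iff.1 (by omega)
  rw [connected_iff]
  refine ⟨fun u w => ?_, hne⟩
  have : ∃ v : α, v ≠ u ∧ v ≠ w := by
    by_contra hcon
    push_neg at hcon
    classical
    have : (Finset.univ : Finset α) ⊆ {u, w} := fun v _ => by
      rcases eq_or_ne v u with rfl | hvu
      · simp
      · simp [hcon v hvu]
    have := Finset.card_le_card this
    have h2 : ({u, w} : Finset α).card ≤ 2 := Finset.card_insert_le _ _ |>.trans (by simp)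
    simp only [Finset.card_univ] at this
    omega
  obtain ⟨v, hvu, hvw⟩ := this
  have hr := (hH.2 v).preconnected ⟨u, hvu.symm⟩ ⟨w, hvw.symm⟩
  exact hr.map (SimpleGraph.Embedding.induce {u | u ≠ v}).toHom

lemma glue_no_minor (hH : TwoConnected H) (hm : (Glue G v0 k).HasMinor H) :
    G.HasMinor H := by
  obtain ⟨f, hne, hconn, hdisj, hadjf⟩ := hm
  by_cases hex : ∃ a0, none ∈ f a0
  · obtain ⟨a0, ha0⟩ := hex
    have hnot : ∀ a, a ≠ a0 → none ∉ f a := fun a ha h =>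
      Set.disjoint_left.1 (hdisj ha) h ha0
    choose I hI using fun (a : {a : α // a ≠ a0}) =>
      exists_inCopy_of_connected (G := G) (hconn a.1) (hnot a.1 a.2)
    -- the copy index is the same for all `a ≠ a0`
    have hconst : ∀ a b : {a : α // a ≠ a0}, I a = I b := by
      intro a b
      have hKconn := hH.2 a0
      have hadjK : ∀ x y : ↥{u : α | u ≠ a0},
          (H.induce {u : α | u ≠ a0}).Adj x y → I ⟨x.1, x.2⟩ = I ⟨y.1, y.2⟩ := by
        intro x y hxy
        obtain ⟨u, hu, v, hv, huv⟩ := hadjf x.1 y.1 hxy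
        have hun : u ≠ none := fun h => hnot x.1 x.2 (h ▸ hu)
        have hvn : v ≠ none := fun h => hnot y.1 y.2 (h ▸ hv)
        have h1 : InCopy (I ⟨x.1, x.2⟩) u := hI ⟨x.1, x.2⟩ u hu
        have h2 : InCopy (I ⟨y.1, y.2⟩) u :=
          inCopy_of_adj huv (hI ⟨y.1, y.2⟩ v hv) hvn
        exact inCopy_unique h1 h2 hun
      have := reachable_const (fun x : ↥{u : α | u ≠ a0} => I ⟨x.1, x.2⟩) hadjK
        (hKconn.preconnected ⟨a.1, a.2⟩ ⟨b.1, b.2⟩)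
      simpa using this
    have h3 : 3 ≤ Fintype.card α := hH.1
    have : ∃ a1 : α, a1 ≠ a0 := by
      have : 1 < Fintype.card α := by omega
      exact Fintype.exists_ne_of_one_lt_card this a0
    obtain ⟨a1, ha1⟩ := this
    set i := I ⟨a1, ha1⟩ with hi
    classical
    set f' : α → Set (Option (Fin k × {u : V // u ≠ v0})) :=
      fun a => if a = a0 then {x | x ∈ f a0 ∧ InCopy i x} else f a with hf'
    have hcopy : ∀ a, ∀ x ∈ f' a, InCopy i x := by
      intro a x hx
      rcases eq_or_ne a a0 with ha | ha
      · simp only [hf', if_pos ha] at hx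
        exact hx.2
      · simp only [hf', if_neg ha] at hx
        have := hI ⟨a, ha⟩ x hx
        rwa [hconst ⟨a, ha⟩ ⟨a1, ha1⟩] at this
    have hsub : ∀ a, f' a ⊆ f a := by
      intro a
      rcases eq_or_ne a a0 with ha | ha
      · subst ha
        simp only [hf', if_pos rfl]
        exact fun x hx => hx.1
      · simp [hf', if_neg ha]
    refine hasMinor_of_glue_inCopy i ?_ ?_ ?_ ?_ hcopy
    · intro a
      rcases eq_or_ne a a0 with ha | ha
      · exact ⟨none, by simp only [hf', if_pos ha]; exact ⟨ha0, inCopy_none i⟩⟩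
      · simpa only [hf', if_neg ha] using hne a
    · intro a
      rcases eq_or_ne a a0 with ha | ha
      · have : f' a = {x | x ∈ f a0 ∧ InCopy i x} := by simp only [hf', if_pos ha]
        rw [this]
        exact trim_connected (hconn a0) ha0 i
      · have : f' a = f a := by simp only [hf', if_neg ha]
        rw [this]
        exact hconn a
    · exact fun a b hab => ((hdisj hab).mono (hsub a) (hsub b))
    · intro a b hab
      obtain ⟨u, hu, v, hv, huv⟩ := hadjf a b hab
      have hne_ab : a ≠ b := hab.ne
      rcases eq_or_ne a a0 with ha | ha
      · have hb : b ≠ a0 := fun h => hne_ab (ha.trans h.symm)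
        have hvn : v ≠ none := fun h => hnot b hb (h ▸ hv)
        have hvc : InCopy i v := hcopy b v (by simp only [hf', if_neg hb]; exact hv)
        refine ⟨u, ?_, v, by simp only [hf', if_neg hb]; exact hv, huv⟩
        simp only [hf', if_pos ha]
        exact ⟨ha ▸ hu, inCopy_of_adj huv hvc hvn⟩
      · rcases eq_or_ne b a0 with hb | hb
        · have hun : u ≠ none := fun h => hnot a ha (h ▸ hu)
          have huc : InCopy i u := hcopy a u (by simp only [hf', if_neg ha]; exact hu)
          refine ⟨u, by simp only [hf', if_neg ha]; exact hu, v, ?_, huv⟩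
          simp only [hf', if_pos hb]
          exact ⟨hb ▸ hv, inCopy_of_adj ((Glue G v0 k).adj_symm huv) huc hun⟩
        · exact ⟨u, by simp only [hf', if_neg ha]; exact hu,
            v, by simp only [hf', if_neg hb]; exact hv, huv⟩
  · push_neg at hex
    choose I hI using fun a => exists_inCopy_of_connected (G := G) (hconn a) (hex a)
    have hHconn := hH.to_connected
    have hconst : ∀ a b : α, I a = I b := fun a b =>
      reachable_const I (fun a b hab => by
        obtain ⟨u, hu, v, hv, huv⟩ := hadjf a b hab
        exact inCopy_unique (hI a u hu)
          (inCopy_of_adj huv (hI b v hv) (fun h => hex b (h ▸ hv)))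
          (fun h => hex a (h ▸ hu)))
        (hHconn.preconnected a b)
    have hne' : Nonempty α := Fintype.card_pos_iff.1 (by have := hH.1; omega)
    obtain ⟨a1⟩ := hne'
    refine hasMinor_of_glue_inCopy (I a1) hne hconn hdisj hadjf ?_
    intro a x hx
    rw [← hconst a a1]
    exact hI a x hx

end Main

section Count
variable {V : Type*} {G : SimpleGraph V} {v0 : V} {k : ℕ}

/-- The copy index of a dart of the glued graph. -/
def dartIdx : ∀ (x y : Option (Fin k × {u : V // u ≠ v0})), (Glue G v0 k).Adj x y → Fin k
  | some (i, _), _, _ => i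
  | none, some (i, _), _ => i
  | none, none, h => absurd (glue_adj_proj h) G.irrefl

lemma inCopy_some {i j : Fin k} {u : {u : V // u ≠ v0}}
    (h : InCopy (v0 := v0) i (some (j, u))) : j = i :=
  inCopy_unique (x := some (j, u)) (inCopy_of_gidx (i := j) rfl) h (by simp)

lemma inCopy_dartIdx {x y} (h : (Glue G v0 k).Adj x y) :
    InCopy (dartIdx x y h) x ∧ InCopy (dartIdx x y h) y := by
  match x, y with
  | some (i, u), some (j, w) =>
    have hij : i = j := (glue_adj.1 h).2 i rfl j rfl
    exact ⟨inCopy_of_gidx rfl, inCopy_of_gidx (by simp [gidx, dartIdx, hij])⟩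
  | some (i, u), none => exact ⟨inCopy_of_gidx rfl, by simp [dartIdx]⟩
  | none, some (i, w) => exact ⟨by simp [dartIdx], inCopy_of_gidx rfl⟩
  | none, none => exact absurd (glue_adj_proj h) G.irrefl

lemma dartIdx_unique {x y} (h : (Glue G v0 k).Adj x y) {i : Fin k}
    (hx : InCopy (v0 := v0) i x) (hy : InCopy (v0 := v0) i y) : dartIdx x y h = i := by
  match x, y with
  | some (j, u), _ => exact inCopy_some hx
  | none, some (j, w) => exact inCopy_some hy
  | none, none => exact absurd (glue_adj_proj h) G.irrefl

/-- Darts of the glued graph are in bijection with `Fin k × G.Dart`. -/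
noncomputable def glueDartEquiv : (Glue G v0 k).Dart ≃ Fin k × G.Dart where
  toFun d := (dartIdx d.fst d.snd d.adj,
    ⟨(gproj v0 d.fst, gproj v0 d.snd), glue_adj_proj d.adj⟩)
  invFun p := ⟨(glift p.1 p.2.fst, glift p.1 p.2.snd), glue_adj_glift.2 p.2.adj⟩
  left_inv d := by
    obtain ⟨hx, hy⟩ := inCopy_dartIdx d.adj
    apply SimpleGraph.Dart.ext
    exact Prod.ext hx hy
  right_inv p := by
    obtain ⟨i, d⟩ := p
    have h1 : InCopy (v0 := v0) i (glift i d.fst) := by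
      unfold glift; split
      · simp
      · exact inCopy_of_gidx rfl
    have h2 : InCopy (v0 := v0) i (glift i d.snd) := by
      unfold glift; split
      · simp
      · exact inCopy_of_gidx rfl
    refine Prod.ext (dartIdx_unique _ h1 h2) ?_
    apply SimpleGraph.Dart.ext
    exact Prod.ext (by simp) (by simp)

lemma nat_card_dart {W : Type*} [Fintype W] (G : SimpleGraph W) :
    Nat.card G.Dart = 2 * Nat.card G.edgeSet := by
  classical
  rw [Nat.card_eq_fintype_card, Nat.card_eq_fintype_card,
    SimpleGraph.dart_card_eq_twice_card_edges, SimpleGraph.edgeFinset,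
    Set.toFinset_card]

lemma glue_card_edges [Fintype V] :
    Nat.card (Glue G v0 k).edgeSet = k * Nat.card G.edgeSet := by
  classical
  have h3 : Nat.card (Glue G v0 k).Dart = k * Nat.card G.Dart := by
    rw [Nat.card_congr (glueDartEquiv (G := G) (v0 := v0) (k := k)), Nat.card_prod]
    simp
  rw [nat_card_dart, nat_card_dart,
    show k * (2 * Nat.card G.edgeSet) = 2 * (k * Nat.card G.edgeSet) by ring] at h3
  omega

/-- The glued graph transported to a `Fin`. -/
lemma exists_glued_witness {α : Type*} [Fintype α] {H : SimpleGraph α} (hH : TwoConnected H)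
    {n : ℕ} (hn : 2 ≤ n) (G : SimpleGraph (Fin n)) (hG : ¬ G.HasMinor H) (k : ℕ) :
    ∃ G' : SimpleGraph (Fin (k * (n - 1) + 1)), ¬ G'.HasMinor H ∧
      Nat.card G'.edgeSet = k * Nat.card G.edgeSet := by
  classical
  set v0 : Fin n := ⟨0, by omega⟩
  have hcard : Fintype.card (Option (Fin k × {u : Fin n // u ≠ v0})) = k * (n - 1) + 1 := by
    rw [Fintype.card_option, Fintype.card_prod, Fintype.card_fin]
    congr 2
    rw [Fintype.card_subtype_compl, Fintype.card_subtype_eq, Fintype.card_fin]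
  let e := Fintype.equivFinOfCardEq hcard
  refine ⟨(Glue G v0 k).map e.toEmbedding, ?_, ?_⟩
  · intro h
    exact hG (glue_no_minor hH (h.of_iso (SimpleGraph.Iso.map e (Glue G v0 k)).symm))
  · rw [← glue_card_edges (G := G) (v0 := v0) (k := k)]
    exact (Nat.card_congr (SimpleGraph.Iso.map e (Glue G v0 k)).mapEdgeSet).symm

end Count

lemma sSup_eq_sSup_of_approx (A B : Set ℝ) (h0A : (0:ℝ) ∈ A) (h0B : (0:ℝ) ∈ B)
    (k1 : ∀ x ∈ A, ∃ y ∈ B, x ≤ y)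
    (k2 : ∀ y ∈ B, ∀ ε : ℝ, 0 < ε → ∃ x ∈ A, y - ε < x) : sSup B = sSup A := by
  by_cases hA : BddAbove A
  · have hBB : BddAbove B := by
      obtain ⟨M, hM⟩ := hA
      refine ⟨M, fun y hy => ?_⟩
      by_contra hy'
      push_neg at hy'
      obtain ⟨x, hx, hlt⟩ := k2 y hy (y - M) (by linarith)
      have := hM hx
      linarith
    apply le_antisymm
    · refine csSup_le ⟨0, h0B⟩ fun y hy => ?_
      by_contra hcon
      push_neg at hcon
      obtain ⟨x, hx, hlt⟩ := k2 y hy (y - sSup A) (by linarith)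
      have := le_csSup hA hx
      linarith
    · refine csSup_le ⟨0, h0A⟩ fun x hx => ?_
      obtain ⟨y, hy, hxy⟩ := k1 x hx
      exact hxy.trans (le_csSup hBB hy)
  · have hBnb : ¬ BddAbove B := by
      rintro ⟨M, hM⟩
      apply hA
      refine ⟨M, fun x hx => ?_⟩
      obtain ⟨y, hy, hxy⟩ := k1 x hx
      exact hxy.trans (hM hy)
    rw [Real.sSup_of_not_bddAbove hA, Real.sSup_of_not_bddAbove hBnb]

/-- For a 2-connected graph `H`, `c'(H) = c(H)`. -/
theorem cPrime_eq_cFun {α : Type*} [Fintype α] (H : SimpleGraph α)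
    (hH : TwoConnected H) : cPrime H = cFun H := by
  classical
  have h3 := hH.1
  unfold cPrime cFun
  refine sSup_eq_sSup_of_approx _ _ ?_ ?_ ?_ ?_
  · exact ⟨1, ⊥, one_pos, not_hasMinor_of_card_lt _ (by omega), by
      rw [SimpleGraph.edgeSet_bot]; simp⟩
  · exact ⟨2, ⊥, le_refl 2, not_hasMinor_of_card_lt _ (by omega), by
      rw [SimpleGraph.edgeSet_bot]; simp⟩
  · rintro x ⟨n, G, hn, hG, rfl⟩
    rcases Nat.lt_or_ge n 2 with h2 | h2
    · have hn1 : n = 1 := by omega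
      subst hn1
      have hE : G.edgeSet = ∅ := by
        rw [Set.eq_empty_iff_forall_notMem]
        intro e
        induction e using Sym2.ind with
        | _ u v =>
          intro he
          rw [SimpleGraph.mem_edgeSet] at he
          exact he.ne (Subsingleton.elim u v)
      refine ⟨0, ⟨2, ⊥, le_refl 2, not_hasMinor_of_card_lt _ (by omega), by
        rw [SimpleGraph.edgeSet_bot]; simp⟩, le_of_eq ?_⟩
      rw [hE]
      simp
    · refine ⟨(Nat.card G.edgeSet : ℝ) / ((n : ℝ) - 1), ⟨n, G, h2, hG, rfl⟩, ?_⟩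
      have hd : (0:ℝ) < (n:ℝ) - 1 := by
        have : (2:ℝ) ≤ (n:ℝ) := by exact_mod_cast h2
        linarith
      gcongr
      linarith
  · rintro y ⟨n, G, hn, hG, rfl⟩ ε hε
    set E : ℕ := Nat.card G.edgeSet with hEdef
    obtain ⟨k, hk⟩ := exists_nat_gt ((E : ℝ) / ε)
    obtain ⟨G', hG', hEG'⟩ := exists_glued_witness hH hn G hG k
    refine ⟨(Nat.card G'.edgeSet : ℝ) / ((k * (n - 1) + 1 : ℕ) : ℝ),
      ⟨k * (n - 1) + 1, G', Nat.succ_pos _, hG', rfl⟩, ?_⟩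
    rw [hEG']
    have h2r : (2:ℝ) ≤ (n:ℝ) := by exact_mod_cast hn
    have hcast : ((k * (n - 1) + 1 : ℕ) : ℝ) = (k : ℝ) * ((n:ℝ) - 1) + 1 := by
      push_cast [Nat.cast_sub (by omega : 1 ≤ n)]
      ring
    rw [hcast]
    set d : ℝ := (n:ℝ) - 1 with hddef
    have hd0 : (0:ℝ) < d := by rw [hddef]; linarith
    have hd1 : (1:ℝ) ≤ d := by rw [hddef]; linarith
    have hm0 : (0:ℝ) < (k : ℝ) * d + 1 := by positivity
    have hE0 : (0:ℝ) ≤ (E : ℝ) := Nat.cast_nonneg _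
    have heq : (E:ℝ)/d - ((k * E : ℕ) : ℝ)/((k:ℝ)*d+1) = (E:ℝ) / (d * ((k:ℝ)*d+1)) := by
      push_cast
      field_simp
      ring
    have hle : (E:ℝ) / (d*((k:ℝ)*d+1)) ≤ (E:ℝ)/((k:ℝ)+1) := by
      have hk1 : (k:ℝ)+1 ≤ d*((k:ℝ)*d+1) := by nlinarith
      gcongr
    have hlt : (E:ℝ)/((k:ℝ)+1) < ε := by
      rw [div_lt_iff₀ (by positivity)]
      rw [div_lt_iff₀ hε] at hk
      nlinarith
    linarith
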